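/- For any constant ν > 0 there is a constant c(ν) > 0 such that for all sufficiently large n, every deterministic ν-reliable spanner H of the unweighted path metric on [n] (with any finite stretch, i.e., only required to keep all surviving points connected) has total edge weight at least c(ν)·n², i.e., lightness Ω(n). -/

import Mathlib

open scoped Classical

/-- The graph `H` with the vertices of `B` (and their edges) deleted. -/
def deleteVerts {V : Type*} (H : SimpleGraph V) (B : Finset V) : SimpleGraph V where
  Adj a b := H.Adj a b ∧ a ∉ B ∧ b ∉ B
  symm := ⟨fun a b h => ⟨h.1.symm, h.2.2, h.2.1⟩⟩
  loopless := ⟨fun a h => H.loopless.irrefl a h.1⟩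

/-- Total weight of a graph on `[n]` whose edge `{i,j}` has weight `|i − j|`. -/
noncomputable def pathGraphWeight (n : ℕ) (H : SimpleGraph (Fin n)) : ℝ :=
  (∑ p : Fin n × Fin n,
    if H.Adj p.1 p.2 then |((p.1 : ℕ) : ℝ) - ((p.2 : ℕ) : ℝ)| else 0) / 2

/-- Any walk from left of a cut to right of a cut contains a crossing edge. -/
lemma walk_cross {n t : ℕ} {G : SimpleGraph (Fin n)} :
    ∀ {u v : Fin n}, G.Walk u v → (u : ℕ) < t → t ≤ (v : ℕ) →
      ∃ a b : Fin n, G.Adj a b ∧ (a : ℕ) < t ∧ t ≤ (b : ℕ) := by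
  intro u v w
  induction w with
  | nil => intro hu hv; omega
  | @cons a b c h p ih =>
    intro hu hv
    by_cases hb : t ≤ (b : ℕ)
    · exact ⟨a, b, h, hu, hb⟩
    · exact ih (by omega) hv

/-- The set of (oriented) edges crossing the cut at `t`. -/
noncomputable def cutEdges (n : ℕ) (H : SimpleGraph (Fin n)) (t : ℕ) :
    Finset (Fin n × Fin n) :=
  Finset.univ.filter fun p => H.Adj p.1 p.2 ∧ (p.1 : ℕ) < t ∧ t ≤ (p.2 : ℕ)

/-- The oriented edge set. -/
noncomputable def orEdges (n : ℕ) (H : SimpleGraph (Fin n)) :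
    Finset (Fin n × Fin n) :=
  Finset.univ.filter fun p => H.Adj p.1 p.2 ∧ (p.1 : ℕ) < (p.2 : ℕ)

lemma sum_cuts (n : ℕ) (H : SimpleGraph (Fin n)) :
    ∑ t ∈ Finset.range n, (cutEdges n H t).card
      = ∑ p ∈ orEdges n H, ((p.2 : ℕ) - (p.1 : ℕ)) := by
  have h1 : ∀ t, cutEdges n H t
      = (orEdges n H).filter (fun p => (p.1 : ℕ) < t ∧ t ≤ (p.2 : ℕ)) := by
    intro t
    ext p
    simp only [cutEdges, orEdges, Finset.mem_filter, Finset.mem_univ, true_and]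
    constructor
    · rintro ⟨hadj, h1, h2⟩; exact ⟨⟨hadj, by omega⟩, h1, h2⟩
    · rintro ⟨⟨hadj, _⟩, h1, h2⟩; exact ⟨hadj, h1, h2⟩
  calc ∑ t ∈ Finset.range n, (cutEdges n H t).card
      = ∑ t ∈ Finset.range n, ∑ p ∈ orEdges n H,
          (if (p.1 : ℕ) < t ∧ t ≤ (p.2 : ℕ) then 1 else 0) := by
        refine Finset.sum_congr rfl fun t _ => ?_
        rw [h1 t, Finset.card_filter]
    _ = ∑ p ∈ orEdges n H, ∑ t ∈ Finset.range n,
          (if (p.1 : ℕ) < t ∧ t ≤ (p.2 : ℕ) then 1 else 0) := Finset.sum_comm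
    _ = ∑ p ∈ orEdges n H, ((p.2 : ℕ) - (p.1 : ℕ)) := by
        refine Finset.sum_congr rfl fun p _ => ?_
        rw [← Finset.card_filter]
        have : (Finset.range n).filter (fun t => (p.1 : ℕ) < t ∧ t ≤ (p.2 : ℕ))
            = Finset.Ioc (p.1 : ℕ) (p.2 : ℕ) := by
          ext t
          simp only [Finset.mem_filter, Finset.mem_range, Finset.mem_Ioc]
          have := p.2.isLt
          omega
        rw [this, Nat.card_Ioc]

lemma weight_eq (n : ℕ) (H : SimpleGraph (Fin n)) :
    pathGraphWeight n H
      = ((∑ p ∈ orEdges n H, ((p.2 : ℕ) - (p.1 : ℕ)) : ℕ) : ℝ) := by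
  classical
  set f : Fin n × Fin n → ℝ :=
    fun p => if H.Adj p.1 p.2 then |((p.1 : ℕ) : ℝ) - ((p.2 : ℕ) : ℝ)| else 0 with hf
  have hswap : ∀ p : Fin n × Fin n, f p.swap = f p := by
    intro p
    simp only [hf, Prod.swap]
    rw [SimpleGraph.adj_comm, abs_sub_comm]
  have hsplit :
      ∑ p : Fin n × Fin n, f p
        = ∑ p ∈ Finset.univ.filter (fun p : Fin n × Fin n => (p.1 : ℕ) < (p.2 : ℕ)), f p
          + ∑ p ∈ Finset.univ.filter (fun p : Fin n × Fin n => ¬ (p.1 : ℕ) < (p.2 : ℕ)), f p :=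
    (Finset.sum_filter_add_sum_filter_not _ _ _).symm
  have hgt :
      ∑ p ∈ Finset.univ.filter (fun p : Fin n × Fin n => ¬ (p.1 : ℕ) < (p.2 : ℕ)), f p
        = ∑ p ∈ Finset.univ.filter (fun p : Fin n × Fin n => (p.2 : ℕ) < (p.1 : ℕ)), f p := by
    refine (Finset.sum_subset ?_ ?_).symm
    · intro p hp
      simp only [Finset.mem_filter, Finset.mem_univ, true_and] at hp ⊢
      omega
    · intro p hp hnp
      simp only [Finset.mem_filter, Finset.mem_univ, true_and] at hp hnp
      have : (p.1 : ℕ) = (p.2 : ℕ) := by omega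
      have : p.1 = p.2 := Fin.ext this
      simp only [hf, this]
      simp
  have hswapsum :
      ∑ p ∈ Finset.univ.filter (fun p : Fin n × Fin n => (p.2 : ℕ) < (p.1 : ℕ)), f p
        = ∑ p ∈ Finset.univ.filter (fun p : Fin n × Fin n => (p.1 : ℕ) < (p.2 : ℕ)), f p := by
    refine Finset.sum_nbij' (fun p => p.swap) (fun p => p.swap) ?_ ?_ ?_ ?_ ?_
    · intro p hp
      simp only [Finset.mem_filter, Finset.mem_univ, true_and] at hp ⊢
      exact hp
    · intro p hp
      simp only [Finset.mem_filter, Finset.mem_univ, true_and] at hp ⊢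
      exact hp
    · intro p _; exact Prod.swap_swap p
    · intro p _; exact Prod.swap_swap p
    · intro p _; exact (hswap p).symm
  have hE :
      ∑ p ∈ Finset.univ.filter (fun p : Fin n × Fin n => (p.1 : ℕ) < (p.2 : ℕ)), f p
        = ∑ p ∈ orEdges n H, (((p.2 : ℕ) - (p.1 : ℕ) : ℕ) : ℝ) := by
    rw [Finset.sum_filter]
    rw [show (orEdges n H) = Finset.univ.filter
        (fun p : Fin n × Fin n => H.Adj p.1 p.2 ∧ (p.1 : ℕ) < (p.2 : ℕ)) from rfl]
    rw [Finset.sum_filter]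
    refine Finset.sum_congr rfl fun p _ => ?_
    by_cases hlt : (p.1 : ℕ) < (p.2 : ℕ)
    · simp only [hlt, if_true, hf]
      by_cases hadj : H.Adj p.1 p.2
      · simp only [hadj, if_true, and_true, true_and]
        rw [Nat.cast_sub (le_of_lt hlt), abs_sub_comm, abs_of_nonneg]
        have : ((p.1 : ℕ) : ℝ) ≤ ((p.2 : ℕ) : ℝ) := by exact_mod_cast le_of_lt hlt
        linarith
      · simp [hadj]
    · simp [hlt]
  rw [pathGraphWeight, hsplit, hgt, hswapsum, hE, Nat.cast_sum]
  ring

/-- The key cut bound. -/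
lemma cut_bound {ν : ℝ} (hν : 0 < ν) {n : ℕ} (H : SimpleGraph (Fin n))
    (hyp : ∀ B : Finset (Fin n), ∃ Bp : Finset (Fin n), B ⊆ Bp ∧
        ((Bp.card : ℝ) ≤ (1 + ν) * (B.card : ℝ)) ∧
        ∀ u, u ∉ Bp → ∀ v, v ∉ Bp → (deleteVerts H B).Reachable u v)
    {t : ℕ} (ht : t < n) :
    ((min t (n - t) : ℕ) : ℝ) ≤ (1 + ν) * ((cutEdges n H t).card : ℝ) := by
  classical
  set B : Finset (Fin n) := (cutEdges n H t).image Prod.fst with hB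
  obtain ⟨Bp, hsub, hcard, hconn⟩ := hyp B
  have hside : (∀ i : Fin n, (i : ℕ) < t → i ∈ Bp) ∨ (∀ i : Fin n, t ≤ (i : ℕ) → i ∈ Bp) := by
    by_contra hcon
    push_neg at hcon
    obtain ⟨⟨u, hu, huB⟩, ⟨v, hv, hvB⟩⟩ := hcon
    obtain ⟨w⟩ := hconn u huB v hvB
    obtain ⟨a, b, hadj, hat, hbt⟩ := walk_cross w hu hv
    have haB : a ∈ B := by
      rw [hB]
      exact Finset.mem_image.2 ⟨(a, b), by
        simp only [cutEdges, Finset.mem_filter, Finset.mem_univ, true_and]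
        exact ⟨hadj.1, hat, hbt⟩, rfl⟩
    exact hadj.2.1 haB
  have hmin : min t (n - t) ≤ Bp.card := by
    rcases hside with hL | hR
    · have hsub2 : (Finset.univ.filter fun i : Fin n => (i : ℕ) < t) ⊆ Bp := by
        intro i hi
        simp only [Finset.mem_filter, Finset.mem_univ, true_and] at hi
        exact hL i hi
      have hcardL : (Finset.univ.filter fun i : Fin n => (i : ℕ) < t).card = t := by
        have : (Finset.univ.filter fun i : Fin n => (i : ℕ) < t)
            = Finset.Iio (⟨t, ht⟩ : Fin n) := by
          ext i
          simp [Finset.mem_Iio, Fin.lt_def]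
        rw [this, Fin.card_Iio]
      calc min t (n - t) ≤ t := min_le_left _ _
        _ = (Finset.univ.filter fun i : Fin n => (i : ℕ) < t).card := hcardL.symm
        _ ≤ Bp.card := Finset.card_le_card hsub2
    · have hsub2 : (Finset.univ.filter fun i : Fin n => t ≤ (i : ℕ)) ⊆ Bp := by
        intro i hi
        simp only [Finset.mem_filter, Finset.mem_univ, true_and] at hi
        exact hR i hi
      have hcardR : (Finset.univ.filter fun i : Fin n => t ≤ (i : ℕ)).card = n - t := by
        have : (Finset.univ.filter fun i : Fin n => t ≤ (i : ℕ))
            = Finset.Ici (⟨t, ht⟩ : Fin n) := by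
          ext i
          simp [Finset.mem_Ici, Fin.le_def]
        rw [this, Fin.card_Ici]
      calc min t (n - t) ≤ n - t := min_le_right _ _
        _ = (Finset.univ.filter fun i : Fin n => t ≤ (i : ℕ)).card := hcardR.symm
        _ ≤ Bp.card := Finset.card_le_card hsub2
  have hBcard : (B.card : ℝ) ≤ ((cutEdges n H t).card : ℝ) := by
    exact_mod_cast Finset.card_image_le
  have h1 : ((min t (n - t) : ℕ) : ℝ) ≤ (Bp.card : ℝ) := by exact_mod_cast hmin
  have hpos : (0 : ℝ) < 1 + ν := by linarith
  calc ((min t (n - t) : ℕ) : ℝ) ≤ (Bp.card : ℝ) := h1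
    _ ≤ (1 + ν) * (B.card : ℝ) := hcard
    _ ≤ (1 + ν) * ((cutEdges n H t).card : ℝ) := by
        exact mul_le_mul_of_nonneg_left hBcard (le_of_lt hpos)

lemma sum_min_bound (n : ℕ) (hn : 2 ≤ n) :
    (n : ℝ) ^ 2 / 32 ≤ ((∑ t ∈ Finset.range n, min t (n - t) : ℕ) : ℝ) := by
  set k := n / 2 with hk
  have hkn : k + 1 ≤ n := by omega
  have h1 : ∑ t ∈ Finset.range (k + 1), t ≤ ∑ t ∈ Finset.range n, min t (n - t) := by
    calc ∑ t ∈ Finset.range (k + 1), t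
        = ∑ t ∈ Finset.range (k + 1), min t (n - t) := by
          refine Finset.sum_congr rfl fun t htm => ?_
          rw [Finset.mem_range] at htm
          have : t ≤ n - t := by omega
          omega
      _ ≤ ∑ t ∈ Finset.range n, min t (n - t) :=
          Finset.sum_le_sum_of_subset (Finset.range_subset_range.2 hkn)
  have h2 : (∑ t ∈ Finset.range (k + 1), t) * 2 = (k + 1) * k :=
    Finset.sum_range_id_mul_two (k + 1)
  have hk4 : (n : ℝ) / 4 ≤ (k : ℝ) := by
    have h' : n ≤ 2 * k + 1 := by omega
    have h'' : (n : ℝ) ≤ 2 * (k : ℝ) + 1 := by exact_mod_cast h'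
    have hn1 : (2 : ℝ) ≤ (n : ℝ) := by exact_mod_cast hn
    linarith
  have hkr : ((∑ t ∈ Finset.range (k + 1), t : ℕ) : ℝ) * 2 = ((k : ℝ) + 1) * k := by
    exact_mod_cast congrArg (fun x : ℕ => (x : ℝ)) h2
  have h3 : (n : ℝ) ^ 2 / 32 ≤ ((∑ t ∈ Finset.range (k + 1), t : ℕ) : ℝ) := by
    have hk0 : (0 : ℝ) ≤ (k : ℝ) := Nat.cast_nonneg _
    have hn0 : (0 : ℝ) ≤ (n : ℝ) / 4 := by positivity
    have hA : ((n : ℝ) / 4) ^ 2 ≤ (k : ℝ) ^ 2 := by nlinarith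
    nlinarith
  calc (n : ℝ) ^ 2 / 32 ≤ ((∑ t ∈ Finset.range (k + 1), t : ℕ) : ℝ) := h3
    _ ≤ ((∑ t ∈ Finset.range n, min t (n - t) : ℕ) : ℝ) := by exact_mod_cast h1

/-- Every deterministic `ν`-reliable spanner (connectivity version) of the
unweighted path metric on `[n]` has total edge weight `Ω(n²)`, i.e. lightness
`Ω(n)`. -/
theorem stmt_8 (ν : ℝ) (hν : 0 < ν) :
    ∃ c : ℝ, 0 < c ∧ ∃ N : ℕ, ∀ n, N ≤ n → ∀ H : SimpleGraph (Fin n),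
      (∀ B : Finset (Fin n), ∃ Bp : Finset (Fin n), B ⊆ Bp ∧
        ((Bp.card : ℝ) ≤ (1 + ν) * (B.card : ℝ)) ∧
        ∀ u, u ∉ Bp → ∀ v, v ∉ Bp → (deleteVerts H B).Reachable u v) →
      c * (n : ℝ) ^ 2 ≤ pathGraphWeight n H := by
  have hpos : (0 : ℝ) < 1 + ν := by linarith
  refine ⟨1 / (32 * (1 + ν)), by positivity, 2, fun n hn H hyp => ?_⟩
  have hsum : ((∑ t ∈ Finset.range n, min t (n - t) : ℕ) : ℝ)
      ≤ (1 + ν) * ((∑ t ∈ Finset.range n, (cutEdges n H t).card : ℕ) : ℝ) := by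
    push_cast
    rw [Finset.mul_sum]
    refine Finset.sum_le_sum fun t htm => ?_
    rw [Finset.mem_range] at htm
    exact_mod_cast cut_bound hν H hyp htm
  have hW : pathGraphWeight n H
      = ((∑ t ∈ Finset.range n, (cutEdges n H t).card : ℕ) : ℝ) := by
    rw [weight_eq, sum_cuts]
  have hmin := sum_min_bound n hn
  rw [hW]
  rw [div_mul_eq_mul_div, one_mul, div_le_iff₀ (by positivity)]
  have : (n : ℝ) ^ 2 / 32 ≤ (1 + ν) * ((∑ t ∈ Finset.range n, (cutEdges n H t).card : ℕ) : ℝ) :=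
    le_trans hmin hsum
  nlinarith [this]
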